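/- Fix a real number p with 0 < p ≤ 1. For each n, equip the space of functions f : Sym (Fin n) 3 → Bool with the product measure in which each coordinate is Bernoulli(p) (i.e., each size-3 multiset of atoms is independently declared mandatory with probability p). Then the probability of the event "for all atoms a, b, c, x, y, if the cycles {a,b,c} and {x,y,c} are both mandatory, then there exists an atom z such that the cycles {a,x,z} and {b,y,z} are both mandatory" tends to 1 as n → ∞. -/

import Mathlib

open MeasureTheory

/-- The Bernoulli(p) measure on `Bool`: `true` with probability `p`,
`false` with probability `1 - p`. -/
noncomputable def bernoulliBool (p : ℝ) : Measure Bool :=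
  p.toNNReal • Measure.dirac true + (1 - p).toNNReal • Measure.dirac false

/-- The product measure on cycle assignments `Sym (Fin n) 3 → Bool` in which each
size-3 multiset of atoms (diversity cycle) is independently mandatory with probability `p`. -/
noncomputable def cycleMeasure (n : ℕ) (p : ℝ) : Measure (Sym (Fin n) 3 → Bool) :=
  Measure.pi fun _ => bernoulliBool p

/-- The size-3 multiset `{a, b, c}` as an element of `Sym (Fin n) 3`. -/
def cyc {n : ℕ} (a b c : Fin n) : Sym (Fin n) 3 :=
  a ::ₛ b ::ₛ c ::ₛ Sym.nil

open Set

section Auxiliary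

lemma bern_true (p : ℝ) : bernoulliBool p {true} = ENNReal.ofReal p := by
  simp [bernoulliBool, Measure.dirac_apply, ENNReal.ofReal, ENNReal.smul_def, - Measure.coe_nnreal_smul]

lemma bern_false (p : ℝ) : bernoulliBool p {false} = ENNReal.ofReal (1 - p) := by
  simp [bernoulliBool, Measure.dirac_apply, ENNReal.ofReal, ENNReal.smul_def, - Measure.coe_nnreal_smul]

lemma bern_prob {p : ℝ} (hp0 : 0 ≤ p) (hp1 : p ≤ 1) :
    IsProbabilityMeasure (bernoulliBool p) := by
  constructor
  have := ENNReal.ofReal_add hp0 (by linarith : (0:ℝ) ≤ 1 - p)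
  simp only [bernoulliBool, Measure.coe_add, Measure.coe_smul, Pi.add_apply, Pi.smul_apply,
    measure_univ, smul_eq_mul, mul_one, ENNReal.smul_def]
  rw [show (p.toNNReal : ENNReal) = ENNReal.ofReal p from rfl,
    show ((1-p).toNNReal : ENNReal) = ENNReal.ofReal (1-p) from rfl, ← this]
  norm_num

lemma meas_any {α : Type*} [Countable α] [MeasurableSpace α] [MeasurableSingletonClass α]
    (s : Set α) : MeasurableSet s := (Set.to_countable s).measurableSet

lemma pi_map_eval {J ι : Type*} [Fintype J] [Fintype ι] [DecidableEq J]
    (ν : Measure Bool) [IsProbabilityMeasure ν] (e : ι → J) (he : Function.Injective e) :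
    Measure.map (fun (f : J → Bool) (i : ι) => f (e i)) (Measure.pi fun _ : J => ν)
      = Measure.pi fun _ : ι => ν := by
  refine (Measure.pi_eq fun s hs => ?_).symm
  have hmeas : Measurable (fun (f : J → Bool) (i : ι) => f (e i)) :=
    measurable_pi_lambda _ fun i => measurable_pi_apply (e i)
  rw [Measure.map_apply hmeas (MeasurableSet.univ_pi hs)]
  have hpre : (fun (f : J → Bool) (i : ι) => f (e i)) ⁻¹' (univ.pi s)
      = univ.pi (fun j => ⋂ (i : ι) (_ : e i = j), s i) := by
    ext f
    simp only [mem_preimage, mem_pi, mem_univ, true_implies, mem_iInter]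
    constructor
    · rintro h j i rfl; exact h i
    · intro h i; exact h (e i) i rfl
  rw [hpre, Measure.pi_pi]
  have key : ∀ i : ι, (⋂ (i' : ι) (_ : e i' = e i), s i') = s i := by
    intro i
    apply Subset.antisymm
    · exact iInter_subset_of_subset i (by simp)
    · intro x hx
      simp only [mem_iInter]
      intro i' hi'
      have : i' = i := he hi'
      subst this; exact hx
  calc ∏ j : J, ν (⋂ (i : ι) (_ : e i = j), s i)
      = ∏ j ∈ (Finset.univ : Finset ι).image e, ν (⋂ (i : ι) (_ : e i = j), s i) := by
        refine (Finset.prod_subset (Finset.subset_univ _) (fun j _ hj => ?_)).symm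
        have h1 : ∀ i : ι, e i ≠ j := fun i hi =>
          hj (Finset.mem_image.2 ⟨i, Finset.mem_univ i, hi⟩)
        have h2 : (⋂ (i : ι) (_ : e i = j), s i) = univ := by
          simp only [iInter_eq_univ]; intro i; simp [h1 i]
        rw [h2]; exact measure_univ
    _ = ∏ i : ι, ν (⋂ (i' : ι) (_ : e i' = e i), s i') :=
        Finset.prod_image (fun i _ j _ h => he h)
    _ = ∏ i : ι, ν (s i) := Finset.prod_congr rfl (fun i _ => by rw [key i])

noncomputable def mcurry (κ : Type*) : ((κ × Bool) → Bool) ≃ᵐ (κ → Bool → Bool) where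
  toEquiv := Equiv.curry κ Bool Bool
  measurable_toFun := measurable_pi_lambda _ fun k => measurable_pi_lambda _ fun b =>
    measurable_pi_apply (k, b)
  measurable_invFun := measurable_pi_lambda _ fun x =>
    (measurable_pi_apply x.2).comp (measurable_pi_apply x.1)

lemma mcurry_mp {κ : Type*} [Fintype κ] (ν : Measure Bool) [IsProbabilityMeasure ν] :
    MeasurePreserving (mcurry κ) (Measure.pi fun _ : κ × Bool => ν)
      (Measure.pi fun _ : κ => Measure.pi fun _ : Bool => ν) := by
  have h : MeasurePreserving (mcurry κ).symm
      (Measure.pi fun _ : κ => Measure.pi fun _ : Bool => ν)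
      (Measure.pi fun _ : κ × Bool => ν) := by
    constructor
    · exact (mcurry κ).symm.measurable
    · refine (Measure.pi_eq (μ := fun _ : κ × Bool => ν) fun s hs => ?_).symm
      rw [Measure.map_apply (mcurry κ).symm.measurable (MeasurableSet.univ_pi hs)]
      have hpre : (mcurry κ).symm ⁻¹' (univ.pi s)
          = univ.pi (fun k => univ.pi (fun b => s (k, b))) := by
        ext g
        simp only [mem_preimage, mem_pi, mem_univ, true_implies, Prod.forall]
        rfl
      rw [hpre, Measure.pi_pi]
      simp_rw [Measure.pi_pi]
      rw [Fintype.prod_prod_type]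
  exact (MeasurePreserving.symm _ h)

lemma pair_bound {J κ : Type*} [Fintype J] [DecidableEq J] [Fintype κ]
    {p : ℝ} (hp0 : 0 ≤ p) (hp1 : p ≤ 1) (c : κ × Bool → J) (hc : Function.Injective c) :
    Measure.pi (fun _ : J => bernoulliBool p)
      {f | ∀ k : κ, ¬ (f (c (k, true)) = true ∧ f (c (k, false)) = true)}
      ≤ (1 - ENNReal.ofReal p ^ 2) ^ (Fintype.card κ) := by
  haveI := bern_prob hp0 hp1
  set ν := bernoulliBool p
  set ν₂ : Measure (Bool → Bool) := Measure.pi fun _ : Bool => ν with hν₂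
  set B : Set (Bool → Bool) := {h | ¬ (h true = true ∧ h false = true)} with hB
  have hFm : Measurable (fun (f : J → Bool) (i : κ × Bool) => f (c i)) :=
    measurable_pi_lambda _ fun i => measurable_pi_apply (c i)
  have hS : {f : J → Bool | ∀ k : κ, ¬ (f (c (k, true)) = true ∧ f (c (k, false)) = true)}
      = (⇑(mcurry κ) ∘ fun (f : J → Bool) i => f (c i)) ⁻¹' (univ.pi fun _ => B) := by
    ext f
    simp only [mem_preimage, mem_setOf_eq, Function.comp_apply, mem_pi, mem_univ, true_implies]
    rfl
  rw [hS, ← Measure.map_apply (((mcurry κ).measurable).comp hFm)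
    (MeasurableSet.univ_pi fun _ => meas_any B)]
  have hmap : Measure.map (⇑(mcurry κ) ∘ fun (f : J → Bool) i => f (c i))
      (Measure.pi fun _ : J => ν) = Measure.pi fun _ : κ => ν₂ := by
    rw [← Measure.map_map (mcurry κ).measurable hFm, pi_map_eval ν c hc,
      (mcurry_mp ν).map_eq]
  rw [hmap, Measure.pi_pi, Finset.prod_const, Finset.card_univ]
  have hBval : ν₂ B = 1 - ENNReal.ofReal p ^ 2 := by
    have hC : B = (univ.pi fun _ : Bool => ({true} : Set Bool))ᶜ := by
      ext h
      simp [hB, Bool.forall_bool, and_comm]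
    rw [hC, prob_compl_eq_one_sub (MeasurableSet.univ_pi fun _ => meas_any _),
      Measure.pi_pi]
    simp [ν, bern_true, sq]
  rw [hBval]

lemma single_bound {J κ : Type*} [Fintype J] [DecidableEq J] [Fintype κ]
    {p : ℝ} (hp0 : 0 ≤ p) (hp1 : p ≤ 1) (c : κ → J) (hc : Function.Injective c) :
    Measure.pi (fun _ : J => bernoulliBool p)
      {f | ∀ k : κ, f (c k) = false}
      ≤ (1 - ENNReal.ofReal p ^ 2) ^ (Fintype.card κ) := by
  haveI := bern_prob hp0 hp1
  have hFm : Measurable (fun (f : J → Bool) (i : κ) => f (c i)) :=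
    measurable_pi_lambda _ fun i => measurable_pi_apply (c i)
  have hS : {f : J → Bool | ∀ k : κ, f (c k) = false}
      = (fun (f : J → Bool) (i : κ) => f (c i)) ⁻¹' (univ.pi fun _ => ({false} : Set Bool)) := by
    ext f; simp
  rw [hS, ← Measure.map_apply hFm (MeasurableSet.univ_pi fun _ => meas_any _),
    pi_map_eval (bernoulliBool p) c hc, Measure.pi_pi]
  simp only [bern_false, Finset.prod_const, Finset.card_univ]
  refine pow_le_pow_left' ?_ _
  rw [ENNReal.ofReal_sub 1 hp0, ENNReal.ofReal_one]
  refine tsub_le_tsub_left ?_ 1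
  calc ENNReal.ofReal p ^ 2 = ENNReal.ofReal p * ENNReal.ofReal p := sq _
    _ ≤ ENNReal.ofReal p * 1 := mul_le_mul_right (ENNReal.ofReal_le_one.2 hp1) _
    _ = ENNReal.ofReal p := mul_one _

lemma cyc_coe {n : ℕ} (a b c : Fin n) : (cyc a b c : Multiset (Fin n)) = a ::ₘ b ::ₘ {c} := rfl

lemma perm3 {α : Type*} (a b c : α) : (a ::ₘ b ::ₘ {c} : Multiset α) = c ::ₘ a ::ₘ {b} := by
  rw [← Multiset.cons_zero c, ← Multiset.cons_zero b, Multiset.cons_swap b c,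
    Multiset.cons_swap a c]

lemma cyc_swap {n : ℕ} (a b c : Fin n) : cyc a b c = cyc b a c := by
  apply Sym.coe_injective
  rw [cyc_coe, cyc_coe, Multiset.cons_swap]

lemma cyc_inj3 {n : ℕ} {a b z z' : Fin n} (h : cyc a b z = cyc a b z') : z = z' := by
  have h' : (cyc a b z : Multiset (Fin n)) = cyc a b z' := by rw [h]
  rw [cyc_coe, cyc_coe] at h'
  have h2 := (Multiset.cons_inj_right b).1 ((Multiset.cons_inj_right a).1 h')
  simpa using h2

lemma cyc_analysis {n : ℕ} {a b x y z z' : Fin n} (h : cyc a x z = cyc b y z')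
    (h1 : z' ≠ a) (h2 : z' ≠ x) :
    z' = z ∧ (a = b ∧ x = y ∨ a = y ∧ x = b) := by
  have h' : (cyc a x z : Multiset (Fin n)) = cyc b y z' := by rw [h]
  rw [cyc_coe, cyc_coe] at h'
  have hz' : z' = z := by
    have : z' ∈ (a ::ₘ x ::ₘ {z} : Multiset (Fin n)) := by
      rw [h']; simp
    simp only [Multiset.mem_cons, Multiset.mem_singleton] at this
    tauto
  subst hz'
  refine ⟨rfl, ?_⟩
  have h'' : (z' ::ₘ a ::ₘ {x} : Multiset (Fin n)) = z' ::ₘ b ::ₘ {y} := by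
    rw [← perm3 a x z', ← perm3 b y z']; exact h'
  have h3 : (a ::ₘ {x} : Multiset (Fin n)) = b ::ₘ {y} :=
    (Multiset.cons_inj_right z').1 h''
  rcases Multiset.cons_eq_cons.1 h3 with ⟨hab, hxy⟩ | ⟨hab, cs, hcs1, hcs2⟩
  · exact Or.inl ⟨hab, by simpa using hxy⟩
  · rcases (Multiset.singleton_eq_cons_iff _).1 hcs1 with ⟨hxb, hcs0⟩
    subst hcs0
    simp only [Multiset.cons_zero, Multiset.singleton_inj] at hcs2
    exact Or.inr ⟨hcs2.symm, hxb⟩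

lemma bad_bound {n : ℕ} {p : ℝ} (hp0 : 0 ≤ p) (hp1 : p ≤ 1) (a b x y : Fin n) :
    cycleMeasure n p {f | ∀ z : Fin n, z ≠ a → z ≠ b → z ≠ x → z ≠ y →
        ¬ (f (cyc a x z) = true ∧ f (cyc b y z) = true)}
      ≤ (1 - ENNReal.ofReal p ^ 2) ^ (n - 4) := by
  classical
  set κ := {z : Fin n // z ≠ a ∧ z ≠ b ∧ z ≠ x ∧ z ≠ y} with hκ
  have hcard : n - 4 ≤ Fintype.card κ := by
    have hc := Fintype.card_subtype_compl (fun z : Fin n => z ≠ a ∧ z ≠ b ∧ z ≠ x ∧ z ≠ y)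
    rw [Fintype.card_fin] at hc
    have hkc : Fintype.card κ
        = Fintype.card {z : Fin n // z ≠ a ∧ z ≠ b ∧ z ≠ x ∧ z ≠ y} := rfl
    have hle : Fintype.card {z : Fin n // z ≠ a ∧ z ≠ b ∧ z ≠ x ∧ z ≠ y} ≤ n :=
      le_trans (Fintype.card_subtype_le _) (le_of_eq (Fintype.card_fin n))
    have h2 : Fintype.card {z : Fin n // ¬ (z ≠ a ∧ z ≠ b ∧ z ≠ x ∧ z ≠ y)} ≤ 4 := by
      have hsub : (Finset.univ.filter
          (fun z : Fin n => ¬ (z ≠ a ∧ z ≠ b ∧ z ≠ x ∧ z ≠ y)))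
          ⊆ ({a, b, x, y} : Finset (Fin n)) := by
        intro z hz
        simp only [Finset.mem_filter, not_and_or, not_not] at hz
        simp only [Finset.mem_insert, Finset.mem_singleton]
        tauto
      have h3 := Finset.card_le_card hsub
      have h4 : ({a, b, x, y} : Finset (Fin n)).card ≤ 4 := by
        have := Finset.card_insert_le a ({b, x, y} : Finset (Fin n))
        have := Finset.card_insert_le b ({x, y} : Finset (Fin n))
        have := Finset.card_insert_le x ({y} : Finset (Fin n))
        simp only [Finset.card_singleton] at *
        omega
      rw [Fintype.card_subtype]
      omega
    simp only [not_and_or, not_not] at h2 hc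
    omega
  have hq1 : (1 - ENNReal.ofReal p ^ 2 : ENNReal) ≤ 1 := tsub_le_self
  refine le_trans ?_ (pow_le_pow_right_of_le_one' hq1 hcard)
  by_cases hcase : (a = b ∧ x = y) ∨ (a = y ∧ x = b)
  · -- degenerate case: the two cycle families coincide
    have hcyc : ∀ z : Fin n, cyc b y z = cyc a x z := by
      rcases hcase with ⟨rfl, rfl⟩ | ⟨rfl, rfl⟩
      · intro z; rfl
      · intro z; exact (cyc_swap _ _ _)
    have hsub : {f : Sym (Fin n) 3 → Bool | ∀ z : Fin n, z ≠ a → z ≠ b → z ≠ x → z ≠ y →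
          ¬ (f (cyc a x z) = true ∧ f (cyc b y z) = true)}
        ⊆ {f | ∀ k : κ, f (cyc a x k.1) = false} := by
      intro f hf k
      have := hf k.1 k.2.1 k.2.2.1 k.2.2.2.1 k.2.2.2.2
      rw [hcyc] at this
      by_contra hne
      have : f (cyc a x k.1) = true := by
        cases hfa : f (cyc a x k.1) <;> simp_all
      tauto
    refine le_trans (measure_mono hsub) ?_
    exact single_bound hp0 hp1 (fun k : κ => cyc a x k.1)
      (fun k k' h => Subtype.ext (cyc_inj3 h))
  · -- nondegenerate case: all the cycles involved are distinct
    set c : κ × Bool → Sym (Fin n) 3 :=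
      fun kb => cond kb.2 (cyc a x kb.1.1) (cyc b y kb.1.1) with hc
    have hcinj : Function.Injective c := by
      rintro ⟨k, bk⟩ ⟨k', bk'⟩ h
      cases bk <;> cases bk' <;> simp only [hc, cond_true, cond_false] at h
      · exact congrArg (fun u => (u, false)) (Subtype.ext (cyc_inj3 h))
      · exfalso
        rcases cyc_analysis h k'.2.2.1 k'.2.2.2.2 with ⟨_, hp'⟩
        rcases hp' with ⟨h1, h2⟩ | ⟨h1, h2⟩
        · exact hcase (Or.inl ⟨h1.symm, h2.symm⟩)
        · exact hcase (Or.inr ⟨h2.symm, h1.symm⟩)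
      · exfalso
        rcases cyc_analysis h k'.2.1 k'.2.2.2.1 with ⟨_, hp'⟩
        rcases hp' with ⟨h1, h2⟩ | ⟨h1, h2⟩
        · exact hcase (Or.inl ⟨h1, h2⟩)
        · exact hcase (Or.inr ⟨h1, h2⟩)
      · exact congrArg (fun u => (u, true)) (Subtype.ext (cyc_inj3 h))
    have hsub : {f : Sym (Fin n) 3 → Bool | ∀ z : Fin n, z ≠ a → z ≠ b → z ≠ x → z ≠ y →
          ¬ (f (cyc a x z) = true ∧ f (cyc b y z) = true)}
        ⊆ {f | ∀ k : κ, ¬ (f (c (k, true)) = true ∧ f (c (k, false)) = true)} := by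
      intro f hf k
      exact hf k.1 k.2.1 k.2.2.1 k.2.2.2.1 k.2.2.2.2
    exact le_trans (measure_mono hsub) (pair_bound hp0 hp1 c hcinj)

end Auxiliary

theorem stmt0 (p : ℝ) (hp0 : 0 < p) (hp1 : p ≤ 1) :
    Filter.Tendsto
      (fun n : ℕ => cycleMeasure n p
        {f | ∀ a b c x y : Fin n,
          f (cyc a b c) = true → f (cyc x y c) = true →
            ∃ z : Fin n, f (cyc a x z) = true ∧ f (cyc b y z) = true})
      Filter.atTop (nhds 1) := by
  classical
  haveI hB : IsProbabilityMeasure (bernoulliBool p) := bern_prob hp0.le hp1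
  haveI : ∀ n : ℕ, IsProbabilityMeasure (cycleMeasure n p) := by
    intro n
    unfold cycleMeasure
    infer_instance
  set G : (n : ℕ) → Set (Sym (Fin n) 3 → Bool) := fun n =>
    {f | ∀ a b c x y : Fin n,
      f (cyc a b c) = true → f (cyc x y c) = true →
        ∃ z : Fin n, f (cyc a x z) = true ∧ f (cyc b y z) = true} with hG
  -- union bound on the complement
  set t : ℝ := 1 - p ^ 2 with ht
  have ht0 : 0 ≤ t := by nlinarith
  have ht1 : t < 1 := by nlinarith
  have hqof : (1 - ENNReal.ofReal p ^ 2 : ENNReal) = ENNReal.ofReal t := by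
    rw [ht, ENNReal.ofReal_sub 1 (sq_nonneg p), ENNReal.ofReal_one, ENNReal.ofReal_pow hp0.le]
  have hcomplbound : ∀ n : ℕ, cycleMeasure n p (G n)ᶜ
      ≤ ENNReal.ofReal ((n : ℝ) ^ 4 * t ^ (n - 4)) := by
    intro n
    have hsub : (G n)ᶜ ⊆ ⋃ q : Fin n × Fin n × Fin n × Fin n,
        {f : Sym (Fin n) 3 → Bool | ∀ z : Fin n, z ≠ q.1 → z ≠ q.2.1 → z ≠ q.2.2.1 →
          z ≠ q.2.2.2 → ¬ (f (cyc q.1 q.2.2.1 z) = true ∧ f (cyc q.2.1 q.2.2.2 z) = true)} := by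
      intro f hf
      simp only [hG, mem_compl_iff, mem_setOf_eq, not_forall] at hf
      obtain ⟨a, b, c, x, y, h1, h2, h3⟩ := hf
      push_neg at h3
      refine mem_iUnion.2 ⟨(a, b, x, y), ?_⟩
      intro z _ _ _ _
      intro hcon
      exact h3 z hcon.1 hcon.2
    refine le_trans (measure_mono hsub) ?_
    refine le_trans (measure_iUnion_le _) ?_
    rw [tsum_fintype]
    have hterm : ∀ q : Fin n × Fin n × Fin n × Fin n,
        cycleMeasure n p
          {f : Sym (Fin n) 3 → Bool | ∀ z : Fin n, z ≠ q.1 → z ≠ q.2.1 → z ≠ q.2.2.1 →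
            z ≠ q.2.2.2 → ¬ (f (cyc q.1 q.2.2.1 z) = true ∧ f (cyc q.2.1 q.2.2.2 z) = true)}
          ≤ (1 - ENNReal.ofReal p ^ 2) ^ (n - 4) :=
      fun q => bad_bound hp0.le hp1 q.1 q.2.1 q.2.2.1 q.2.2.2
    refine le_trans (Finset.sum_le_card_nsmul _ _ _ (fun q _ => hterm q)) ?_
    rw [Finset.card_univ]
    have hcard : (Fintype.card (Fin n × Fin n × Fin n × Fin n)) = n ^ 4 := by
      simp [Fintype.card_prod]
      ring
    rw [hcard, nsmul_eq_mul, hqof, ← ENNReal.ofReal_pow ht0,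
      ← ENNReal.ofReal_natCast (n ^ 4), ← ENNReal.ofReal_mul (by positivity)]
    apply ENNReal.ofReal_le_ofReal
    apply le_of_eq
    push_cast
    ring
  -- the real bound tends to zero
  have hreal : Filter.Tendsto (fun n : ℕ => (n : ℝ) ^ 4 * t ^ (n - 4))
      Filter.atTop (nhds 0) := by
    have h2 : Filter.Tendsto (fun m : ℕ => (5:ℝ) ^ 4 * ((m:ℝ) ^ 4 * t ^ m))
        Filter.atTop (nhds 0) := by
      simpa using (tendsto_pow_const_mul_const_pow_of_lt_one 4 ht0 ht1).const_mul ((5:ℝ) ^ 4)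
    have h1 : Filter.Tendsto (fun m : ℕ => ((m : ℝ) + 4) ^ 4 * t ^ m)
        Filter.atTop (nhds 0) := by
      refine squeeze_zero' ?_ ?_ h2
      · filter_upwards with m
        positivity
      · filter_upwards [Filter.eventually_ge_atTop 1] with m hm
        have hm' : (1 : ℝ) ≤ (m : ℝ) := by exact_mod_cast hm
        have hle : ((m : ℝ) + 4) ^ 4 ≤ (5 * (m : ℝ)) ^ 4 := by
          have : ((m : ℝ) + 4) ≤ 5 * m := by nlinarith
          have h0 : (0:ℝ) ≤ (m : ℝ) + 4 := by positivity
          exact pow_le_pow_left₀ h0 this 4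
        calc ((m : ℝ) + 4) ^ 4 * t ^ m ≤ (5 * (m : ℝ)) ^ 4 * t ^ m := by
              have : (0:ℝ) ≤ t ^ m := pow_nonneg ht0 m
              exact mul_le_mul_of_nonneg_right hle this
          _ = (5:ℝ) ^ 4 * ((m:ℝ) ^ 4 * t ^ m) := by ring
    have hcomp := h1.comp (Filter.tendsto_sub_atTop_nat 4)
    refine hcomp.congr' ?_
    filter_upwards [Filter.eventually_ge_atTop 4] with n hn
    simp only [Function.comp_apply]
    congr 1
    have : ((n - 4 : ℕ) : ℝ) = (n : ℝ) - 4 := by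
      push_cast [Nat.cast_sub hn]
      ring
    rw [this]
    ring
  -- complement measure tends to zero
  have hcompl0 : Filter.Tendsto (fun n : ℕ => cycleMeasure n p (G n)ᶜ)
      Filter.atTop (nhds 0) := by
    have hub : Filter.Tendsto (fun n : ℕ => ENNReal.ofReal ((n : ℝ) ^ 4 * t ^ (n - 4)))
        Filter.atTop (nhds 0) := by
      have := ENNReal.tendsto_ofReal hreal
      rwa [ENNReal.ofReal_zero] at this
    exact tendsto_of_tendsto_of_tendsto_of_le_of_le tendsto_const_nhds hub
      (fun n => zero_le) (fun n => hcomplbound n)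
  -- conclude
  have hGmeas : ∀ n : ℕ, cycleMeasure n p (G n) = 1 - cycleMeasure n p (G n)ᶜ := by
    intro n
    rw [← prob_compl_eq_one_sub (meas_any (G n)ᶜ), compl_compl]
  have : Filter.Tendsto (fun n : ℕ => 1 - cycleMeasure n p (G n)ᶜ)
      Filter.atTop (nhds 1) := by
    have := ENNReal.Tendsto.sub (tendsto_const_nhds (x := (1 : ENNReal))) hcompl0
      (Or.inl ENNReal.one_ne_top)
    simpa using this
  refine this.congr ?_
  intro n
  exact (hGmeas n).symm
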